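/- An ε-locking scheme has small accessible information: if E : [2^n]×[t] → S(C) is ε-locking with ε ≤ 1/(2e), then for X uniform on [2^n], K uniform on [t], and any measurement on C with outcome I applied to E(X,K), the mutual information satisfies I(X; I) ≤ 2εn + η(ε), where η(ε) = −2ε ln(2ε). -/

import Mathlib

open Matrix
open scoped BigOperators ComplexOrder

/-- The joint probability `P(I = i, X = x)` for the message `X` uniform on `[2^n]`, the
key `K` uniform on `[t]` and independent of `X`, and the POVM `{M_i}` measured on the
ciphertext `E(X, K)`. -/
noncomputable def lockProb16 (N t dC m : ℕ)
    (E : Fin N → Fin t → Matrix (Fin dC) (Fin dC) ℂ)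
    (M : Fin m → Matrix (Fin dC) (Fin dC) ℂ) (i : Fin m) (x : Fin N) : ℝ :=
  (1 / ((N : ℝ) * t)) * ∑ k, ((M i * E x k).trace).re


lemma aux_mul_log_div_le {a b : ℝ} (ha : 0 ≤ a) (hb : 0 < b) :
    a * Real.log (b / a) ≤ b - a := by
  rcases eq_or_lt_of_le ha with h | h
  · simp [← h]; linarith
  · have h1 : Real.log (b / a) ≤ b / a - 1 := Real.log_le_sub_one_of_pos (div_pos hb h)
    have h2 := mul_le_mul_of_nonneg_left h1 ha
    have h3 : a * (b / a - 1) = b - a := by field_simp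
    linarith

lemma aux_eta_subadd {a d : ℝ} (ha : 0 ≤ a) (hd : 0 ≤ d) :
    -((a + d) * Real.log (a + d)) ≤ -(a * Real.log a) + -(d * Real.log d) := by
  have h1 : a * Real.log a ≤ a * Real.log (a + d) := by
    rcases eq_or_lt_of_le ha with h | h
    · simp [← h]
    · exact mul_le_mul_of_nonneg_left (Real.log_le_log h (by linarith)) ha
  have h2 : d * Real.log d ≤ d * Real.log (a + d) := by
    rcases eq_or_lt_of_le hd with h | h
    · simp [← h]
    · exact mul_le_mul_of_nonneg_left (Real.log_le_log h (by linarith)) hd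
  nlinarith [h1, h2]

lemma aux_eta_mono {a b : ℝ} (ha : 0 ≤ a) (hab : a ≤ b) (hb : b ≤ Real.exp (-1)) :
    -(a * Real.log a) ≤ -(b * Real.log b) := by
  rcases eq_or_lt_of_le ha with h | h
  · rcases eq_or_lt_of_le (ha.trans hab) with h2 | h2
    · simp [← h, ← h2]
    · have hlb : Real.log b ≤ -1 := by
        have := Real.log_le_log h2 hb
        rwa [Real.log_exp] at this
      simp only [← h]
      nlinarith
  · have hb0 : 0 < b := lt_of_lt_of_le h hab
    have hlb : Real.log b ≤ -1 := by
      have := Real.log_le_log hb0 hb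
      rwa [Real.log_exp] at this
    have hld := aux_mul_log_div_le (le_of_lt h) hb0
    rw [Real.log_div (ne_of_gt hb0) (ne_of_gt h)] at hld
    nlinarith [hld, hlb, hab, h.le]

lemma aux_sum_eta {N : ℕ} (hN : 0 < N) (a : Fin N → ℝ) (ha : ∀ x, 0 ≤ a x) :
    ∑ x, -(a x * Real.log (a x)) ≤
      (∑ x, a x) * Real.log N + -((∑ x, a x) * Real.log (∑ x, a x)) := by
  set A := ∑ x, a x with hA
  have hA0 : 0 ≤ A := Finset.sum_nonneg fun x _ => ha x
  rcases eq_or_lt_of_le hA0 with h | h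
  · have hz : ∀ x ∈ Finset.univ, a x = 0 :=
      (Finset.sum_eq_zero_iff_of_nonneg (fun x _ => ha x)).1 h.symm
    have hz' : ∀ x ∈ (Finset.univ : Finset (Fin N)), -(a x * Real.log (a x)) = 0 := by
      intro x hx; rw [hz x hx]; simp
    rw [Finset.sum_congr rfl hz']
    simp [← h]
  · have key : ∀ x : Fin N, -(a x * Real.log (a x)) ≤
        A / N - a x + a x * Real.log N - a x * Real.log A := by
      intro x
      rcases eq_or_lt_of_le (ha x) with h0 | h0
      · have hpos : (0:ℝ) < A / N := by positivity
        simp only [← h0]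
        simp
        positivity
      · have hmain := aux_mul_log_div_le (le_of_lt h0) (show (0:ℝ) < A / N by positivity)
        have hlog : Real.log (A / N / a x)
            = Real.log A - Real.log N - Real.log (a x) := by
          rw [Real.log_div (by positivity) (ne_of_gt h0),
            Real.log_div (ne_of_gt h) (by positivity)]
        rw [hlog] at hmain
        nlinarith [hmain]
    calc ∑ x, -(a x * Real.log (a x))
        ≤ ∑ x : Fin N, (A / N - a x + a x * Real.log N - a x * Real.log A) :=
          Finset.sum_le_sum fun x _ => key x
      _ = (N : ℝ) * (A / N) - A + A * Real.log N - A * Real.log A := by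
          rw [Finset.sum_sub_distrib, Finset.sum_add_distrib, Finset.sum_sub_distrib,
            Finset.sum_const, Finset.card_univ, Fintype.card_fin,
            ← Finset.sum_mul, ← Finset.sum_mul, ← hA]
          simp [nsmul_eq_mul]
      _ = A * Real.log N + -(A * Real.log A) := by
          field_simp
          ring

set_option maxHeartbeats 1000000 in
lemma aux_core (n N : ℕ) (hN : N = 2 ^ n) (q : Fin N → ℝ) (hq0 : ∀ x, 0 ≤ q x)
    (hq1 : ∑ x, q x = 1) (ε : ℝ) (hε : 0 < ε) (hε' : ε ≤ 1 / (2 * Real.exp 1))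
    (hTV : (1 / 2) * ∑ x, |q x - 1 / (N : ℝ)| ≤ ε) :
    (n : ℝ) - ∑ x, -(q x * Real.logb 2 (q x)) ≤
      2 * ε * n + (-(2 * ε) * Real.log (2 * ε)) := by
  have hNpos : 0 < N := hN ▸ pow_pos (by norm_num) n
  have hNR : (0:ℝ) < N := by exact_mod_cast hNpos
  have hlog2 : (0:ℝ) < Real.log 2 := Real.log_pos (by norm_num)
  have hlog2' : (0.6931471803:ℝ) < Real.log 2 := Real.log_two_gt_d9
  have hexp1 : (2.7182818283:ℝ) < Real.exp 1 := Real.exp_one_gt_d9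
  have h2ε : 2 * ε ≤ Real.exp (-1) := by
    rw [Real.exp_neg]
    have he : (0:ℝ) < Real.exp 1 := Real.exp_pos 1
    have : 2 * (1 / (2 * Real.exp 1)) = (Real.exp 1)⁻¹ := by field_simp
    linarith [this ▸ (by linarith : 2 * ε ≤ 2 * (1 / (2 * Real.exp 1)))]
  have hL : Real.log (2 * ε) ≤ -1 := by
    have := Real.log_le_log (by positivity) h2ε
    rwa [Real.log_exp] at this
  have hεexp : Real.exp (-1) * Real.exp 1 = 1 := by
    rw [← Real.exp_add]; norm_num
  have hε4 : ε < 1 / 4 := by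
    nlinarith [Real.exp_pos (-1), h2ε, hexp1]
  have hεe : ε ≤ Real.exp (-1) := by linarith
  -- convert goal to natural logarithms
  have hHconv : ∑ x, -(q x * Real.logb 2 (q x))
      = (∑ x, -(q x * Real.log (q x))) / Real.log 2 := by
    rw [Finset.sum_div]
    refine Finset.sum_congr rfl fun x _ => ?_
    simp only [Real.logb]
    ring
  have hnconv : (n : ℝ) = Real.log N / Real.log 2 := by
    rw [hN]; push_cast; rw [Real.log_pow]; field_simp
  have hlogN : Real.log N = n * Real.log 2 := by
    rw [hN]; push_cast; rw [Real.log_pow]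
  conv_lhs => rw [hnconv, hHconv]
  rw [div_sub_div_same, div_le_iff₀ hlog2]
  -- key inequality in nats
  rcases Nat.lt_or_ge n 2 with hn | hn
  · interval_cases n
    · -- n = 0
      norm_num at hN
      subst hN
      have h1 : q 0 = 1 := by simpa using hq1
      have hsum : ∑ x : Fin 1, -(q x * Real.log (q x)) = 0 := by
        simp [h1]
      rw [hsum]
      have k2 : 0 ≤ 2 * ε * (-Real.log (2 * ε) - 1) :=
        mul_nonneg (by linarith) (by linarith)
      have h5 : 0 ≤ (-(2 * ε) * Real.log (2 * ε)) * Real.log 2 := by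
        apply mul_nonneg _ hlog2.le
        nlinarith [k2]
      push_cast
      simp only [Real.log_one]
      nlinarith [h5]
    · -- n = 1
      norm_num at hN
      subst hN
      have hq01 : q 0 + q 1 = 1 := by simpa [Fin.sum_univ_two] using hq1
      have hTV2 : (1/2) * (|q 0 - 1/2| + |q 1 - 1/2|) ≤ ε := by
        have h := hTV
        push_cast at h
        rw [Fin.sum_univ_two] at h
        exact h
      have habs : |q 0 - 1/2| ≤ ε := by
        have h12 : |q 1 - 1/2| = |q 0 - 1/2| := by
          rw [show q 1 - 1/2 = -(q 0 - 1/2) by linarith, abs_neg]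
        rw [h12] at hTV2
        linarith
      have hsq : (q 0 - 1/2)^2 ≤ ε^2 := by
        have h := abs_le.mp habs
        nlinarith [h.1, h.2]
      have tlog : ∀ s : ℝ, 0 ≤ s → s * Real.log (2 * s) ≤ s * (2 * s - 1) := by
        intro s hs
        rcases eq_or_lt_of_le hs with h | h
        · simp [← h]
        · exact mul_le_mul_of_nonneg_left
            (Real.log_le_sub_one_of_pos (by positivity)) hs
      have esp : ∀ s : ℝ, 0 ≤ s →
          s * Real.log (2 * s) = s * Real.log 2 + s * Real.log s := by
        intro s hs
        rcases eq_or_lt_of_le hs with h | h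
        · simp [← h]
        · rw [Real.log_mul two_ne_zero (ne_of_gt h)]; ring
      have t0 := tlog (q 0) (hq0 0)
      have t1 := tlog (q 1) (hq0 1)
      have e0 := esp (q 0) (hq0 0)
      have e1 := esp (q 1) (hq0 1)
      rw [Fin.sum_univ_two]
      push_cast
      have k2 : 0 ≤ 2 * ε * (-Real.log (2 * ε) - 1) :=
        mul_nonneg (by linarith) (by linarith)
      have hA1 : 2 * ε ≤ -(2 * ε) * Real.log (2 * ε) := by nlinarith [k2]
      have hq01log : q 0 * Real.log 2 + q 1 * Real.log 2 = Real.log 2 := by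
        have : (q 0 + q 1) * Real.log 2 = 1 * Real.log 2 := by rw [hq01]
        linarith [this]
      have hq1sq : q 1 ^ 2 = (1 - q 0) ^ 2 := by
        rw [show q 1 = 1 - q 0 by linarith]
      have hmid : Real.log 2 + q 0 * Real.log (q 0) + q 1 * Real.log (q 1)
          ≤ 4 * ε ^ 2 := by
        nlinarith [t0, t1, e0, e1, hsq, hq01, hq01log, hq1sq]
      have hfin : 4 * ε ^ 2 ≤ 4 * ε * Real.log 2 := by nlinarith [hε, hε4, hlog2']
      have hRHS : 4 * ε * Real.log 2
          ≤ (2 * ε * 1 + -(2 * ε) * Real.log (2 * ε)) * Real.log 2 := by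
        apply mul_le_mul_of_nonneg_right _ hlog2.le
        linarith
      linarith [hmid, hfin, hRHS]
  · -- n ≥ 2
    have hn2 : (2:ℝ) ≤ (n:ℝ) := by exact_mod_cast hn
    set u : ℝ := 1 / (N : ℝ) with hu_def
    have hu : 0 < u := by positivity
    set a : Fin N → ℝ := fun x => max (u - q x) 0 with ha_def
    set b : Fin N → ℝ := fun x => max (q x - u) 0 with hb_def
    have ha0 : ∀ x, 0 ≤ a x := fun x => le_max_right _ _
    have hb0 : ∀ x, 0 ≤ b x := fun x => le_max_right _ _
    have hab_abs : ∀ x, a x + b x = |q x - u| := by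
      intro x
      rcases le_total (q x) u with h | h
      · rw [ha_def, hb_def]
        simp only []
        rw [max_eq_left (by linarith), max_eq_right (by linarith),
          abs_of_nonpos (by linarith)]
        ring
      · rw [ha_def, hb_def]
        simp only []
        rw [max_eq_right (by linarith), max_eq_left (by linarith),
          abs_of_nonneg (by linarith)]
        ring
    have hba : ∀ x, b x - a x = q x - u := by
      intro x
      rcases le_total (q x) u with h | h
      · rw [ha_def, hb_def]
        simp only []
        rw [max_eq_right (by linarith : q x - u ≤ 0), max_eq_left (by linarith : (0:ℝ) ≤ u - q x)]
        ring
      · rw [ha_def, hb_def]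
        simp only []
        rw [max_eq_left (by linarith : (0:ℝ) ≤ q x - u), max_eq_right (by linarith : u - q x ≤ 0)]
        ring
    set A := ∑ x, a x with hA_def
    set B := ∑ x, b x with hB_def
    have hA0 : 0 ≤ A := Finset.sum_nonneg fun x _ => ha0 x
    have hAB : B - A = 0 := by
      have h1 : ∑ x, (b x - a x) = ∑ x, (q x - u) := by
        exact Finset.sum_congr rfl fun x _ => hba x
      have h2 : ∑ x : Fin N, (q x - u) = 1 - (N:ℝ) * u := by
        rw [Finset.sum_sub_distrib, hq1, Finset.sum_const, Finset.card_univ,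
          Fintype.card_fin, nsmul_eq_mul]
      have h3 : (N:ℝ) * u = 1 := by rw [hu_def]; field_simp
      rw [Finset.sum_sub_distrib] at h1
      rw [h3] at h2
      simp only [← hA_def, ← hB_def] at h1
      linarith
    have hABsum : A + B ≤ 2 * ε := by
      have h1 : ∑ x, (a x + b x) = ∑ x, |q x - u| :=
        Finset.sum_congr rfl fun x _ => hab_abs x
      rw [Finset.sum_add_distrib] at h1
      simp only [← hA_def, ← hB_def] at h1
      have := hTV
      rw [hu_def] at h1
      linarith
    have hAε : A ≤ ε := by linarith
    have hBε : B ≤ ε := by linarith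
    have hq_le1 : ∀ x, q x ≤ 1 := by
      intro x
      calc q x ≤ ∑ y, q y := Finset.single_le_sum (fun y _ => hq0 y) (Finset.mem_univ x)
        _ = 1 := hq1
    have perx : ∀ x, -(u * Real.log u) + q x * Real.log (q x)
        ≤ -(a x * Real.log (a x)) + b x := by
      intro x
      rcases le_total (q x) u with h | h
      · have hax : a x = u - q x := by rw [ha_def]; exact max_eq_left (by linarith)
        have hbx : b x = 0 := by rw [hb_def]; exact max_eq_right (by linarith)
        have key := aux_eta_subadd (hq0 x) (show (0:ℝ) ≤ u - q x by linarith)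
        rw [show q x + (u - q x) = u by ring] at key
        rw [hax, hbx]
        linarith
      · have hax : a x = 0 := by rw [ha_def]; exact max_eq_right (by linarith)
        have hbx : b x = q x - u := by rw [hb_def]; exact max_eq_left (by linarith)
        have hqpos : 0 < q x := lt_of_lt_of_le hu h
        have hlogq : Real.log (q x) ≤ 0 :=
          Real.log_nonpos (le_of_lt hqpos) (hq_le1 x)
        have hld := aux_mul_log_div_le hu.le hqpos
        rw [Real.log_div (ne_of_gt hqpos) (ne_of_gt hu)] at hld
        rw [hax, hbx]
        simp only [zero_mul, neg_zero]
        nlinarith [hld, hlogq, h]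
    have hLHS : Real.log N - ∑ x, -(q x * Real.log (q x))
        = ∑ x : Fin N, (-(u * Real.log u) + q x * Real.log (q x)) := by
      rw [Finset.sum_add_distrib, Finset.sum_const, Finset.card_univ, Fintype.card_fin,
        nsmul_eq_mul]
      have h1 : -(u * Real.log u) = Real.log N / N := by
        rw [hu_def, one_div, Real.log_inv]
        field_simp
      have h2 : ∑ x, q x * Real.log (q x) = -∑ x, -(q x * Real.log (q x)) := by
        rw [← Finset.sum_neg_distrib]
        exact Finset.sum_congr rfl fun x _ => by ring
      rw [h1, h2]
      field_simp
      ring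
    rw [hLHS]
    have hstep1 : ∑ x : Fin N, (-(u * Real.log u) + q x * Real.log (q x))
        ≤ ∑ x, (-(a x * Real.log (a x)) + b x) :=
      Finset.sum_le_sum fun x _ => perx x
    have hstep2 : ∑ x, (-(a x * Real.log (a x)) + b x)
        = (∑ x, -(a x * Real.log (a x))) + B := by
      rw [Finset.sum_add_distrib]
    have hstep3 := aux_sum_eta hNpos a ha0
    simp only [← hA_def] at hstep3
    have hstep4 : A * Real.log N ≤ ε * Real.log N := by
      apply mul_le_mul_of_nonneg_right hAε
      rw [hlogN]; positivity
    have hstep5 : -(A * Real.log A) ≤ -(ε * Real.log ε) :=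
      aux_eta_mono hA0 hAε hεe
    have hlogε : Real.log ε = Real.log (2 * ε) - Real.log 2 := by
      have := Real.log_mul (two_ne_zero) (ne_of_gt hε)
      linarith
    have h1 : 0 ≤ ε * ((n:ℝ) - 2) * Real.log 2 := by
      apply mul_nonneg (mul_nonneg hε.le (by linarith)) hlog2.le
    have h2 : 0 ≤ ε * ((-Real.log (2*ε)) - 1) * (2 * Real.log 2 - 1) := by
      apply mul_nonneg (mul_nonneg hε.le (by linarith)) (by linarith)
    have h3 : 0 ≤ ε * (3 * Real.log 2 - 2) := by
      apply mul_nonneg hε.le (by linarith)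
    nlinarith [hstep1, hstep2, hstep3, hstep4, hstep5, hBε, h1, h2, h3, hlogN, hlogε]

lemma aux_trace_re_nonneg {d : ℕ} {A B : Matrix (Fin d) (Fin d) ℂ}
    (hA : A.PosSemidef) (hB : B.PosSemidef) : 0 ≤ ((A * B).trace).re := by
  obtain ⟨P, hP⟩ : ∃ P : Matrix (Fin d) (Fin d) ℂ, A = Pᴴ * P := by
    open scoped MatrixOrder Matrix.Norms.L2Operator in
    exact CStarAlgebra.nonneg_iff_eq_star_mul_self.mp hA.nonneg
  obtain ⟨Q, hQ⟩ : ∃ Q : Matrix (Fin d) (Fin d) ℂ, B = Qᴴ * Q := by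
    open scoped MatrixOrder Matrix.Norms.L2Operator in
    exact CStarAlgebra.nonneg_iff_eq_star_mul_self.mp hB.nonneg
  have htr : (A * B).trace = (((Q * Pᴴ)ᴴ) * (Q * Pᴴ)).trace := by
    rw [hP, hQ, conjTranspose_mul, conjTranspose_conjTranspose]
    rw [show Pᴴ * P * (Qᴴ * Q) = Pᴴ * (P * (Qᴴ * Q)) from by rw [Matrix.mul_assoc]]
    rw [Matrix.trace_mul_comm]
    simp only [Matrix.mul_assoc]
  rw [htr, Matrix.trace, Complex.re_sum]
  apply Finset.sum_nonneg
  intro i _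
  rw [Matrix.diag_apply, Matrix.mul_apply, Complex.re_sum]
  apply Finset.sum_nonneg
  intro j _
  rw [Matrix.conjTranspose_apply, Complex.mul_re]
  simp only [Complex.star_def, Complex.conj_re, Complex.conj_im]
  nlinarith [sq_nonneg ((Q * Pᴴ) j i).re, sq_nonneg ((Q * Pᴴ) j i).im]

/-- An `ε`-locking scheme has small accessible information: if
`E : [2^n] × [t] → S(C)` is `ε`-locking with `ε ≤ 1/(2e)`, then for `X` uniform on
`[2^n]`, `K` uniform on `[t]`, and any POVM measurement on `C` with outcome `I` applied
to `E(X,K)`, the mutual information satisfies `I(X; I) ≤ 2εn + η(ε)`, where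
`η(ε) = −2ε ln(2ε)`.  Here `I(X;I) = H(X) − Σ_i P(I=i) H(X|I=i)` with `H(X) = n`
(entropies base 2). -/
theorem stmt16 (n N t dC : ℕ) (hN : N = 2 ^ n) (ht : 0 < t) (hdC : 0 < dC)
    (ε : ℝ) (hε : 0 < ε) (hε' : ε ≤ 1 / (2 * Real.exp 1))
    (E : Fin N → Fin t → Matrix (Fin dC) (Fin dC) ℂ)
    (hEpsd : ∀ x k, (E x k).PosSemidef) (hEtr : ∀ x k, (E x k).trace = 1)
    (hlock : ∀ (m : ℕ) (M : Fin m → Matrix (Fin dC) (Fin dC) ℂ),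
      (∀ i, (M i).PosSemidef) → (∑ i, M i = 1) →
      ∀ i : Fin m, 0 < ∑ x, lockProb16 N t dC m E M i x →
        (1 / 2) * ∑ x : Fin N,
            |lockProb16 N t dC m E M i x / (∑ x', lockProb16 N t dC m E M i x')
              - 1 / (N : ℝ)| ≤ ε) :
    ∀ (m : ℕ) (M : Fin m → Matrix (Fin dC) (Fin dC) ℂ),
      (∀ i, (M i).PosSemidef) → (∑ i, M i = 1) →
      (n : ℝ) - ∑ i : Fin m, (∑ x, lockProb16 N t dC m E M i x) *
          (∑ x : Fin N,
            -((lockProb16 N t dC m E M i x / (∑ x', lockProb16 N t dC m E M i x')) *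
              Real.logb 2
                (lockProb16 N t dC m E M i x / (∑ x', lockProb16 N t dC m E M i x'))))
        ≤ 2 * ε * n + (-(2 * ε) * Real.log (2 * ε)) := by
  intro m M hM hM1
  have hNpos : 0 < N := hN ▸ pow_pos (by norm_num) n
  have hNR : (0:ℝ) < N := by exact_mod_cast hNpos
  have htR : (0:ℝ) < t := by exact_mod_cast ht
  have hlp0 : ∀ i x, 0 ≤ lockProb16 N t dC m E M i x := by
    intro i x
    unfold lockProb16
    apply mul_nonneg (by positivity)
    exact Finset.sum_nonneg fun k _ => aux_trace_re_nonneg (hM i) (hEpsd x k)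
  have hp0 : ∀ i, 0 ≤ ∑ x, lockProb16 N t dC m E M i x :=
    fun i => Finset.sum_nonneg fun x _ => hlp0 i x
  -- total probability is 1
  have hpsum : ∑ i, ∑ x, lockProb16 N t dC m E M i x = 1 := by
    rw [Finset.sum_comm]
    have hx : ∀ x : Fin N, ∑ i, lockProb16 N t dC m E M i x = 1 / (N:ℝ) := by
      intro x
      unfold lockProb16
      rw [← Finset.mul_sum, Finset.sum_comm]
      have hk : ∀ k : Fin t, ∑ i, ((M i * E x k).trace).re = 1 := by
        intro k
        rw [← Complex.re_sum, ← Matrix.trace_sum, ← Finset.sum_mul, hM1, one_mul,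
          hEtr x k, Complex.one_re]
      rw [Finset.sum_congr rfl fun k _ => hk k, Finset.sum_const, Finset.card_univ,
        Fintype.card_fin, nsmul_eq_mul, mul_one]
      field_simp
    rw [Finset.sum_congr rfl fun x _ => hx x, Finset.sum_const, Finset.card_univ,
      Fintype.card_fin, nsmul_eq_mul]
    field_simp
  -- rewrite LHS as a convex combination
  have hsplit : (n : ℝ) - ∑ i : Fin m, (∑ x, lockProb16 N t dC m E M i x) *
          (∑ x : Fin N,
            -((lockProb16 N t dC m E M i x / (∑ x', lockProb16 N t dC m E M i x')) *
              Real.logb 2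
                (lockProb16 N t dC m E M i x / (∑ x', lockProb16 N t dC m E M i x'))))
      = ∑ i : Fin m, (∑ x, lockProb16 N t dC m E M i x) *
          ((n:ℝ) - ∑ x : Fin N,
            -((lockProb16 N t dC m E M i x / (∑ x', lockProb16 N t dC m E M i x')) *
              Real.logb 2
                (lockProb16 N t dC m E M i x / (∑ x', lockProb16 N t dC m E M i x')))) := by
    rw [Finset.sum_congr rfl (fun i _ => mul_sub (∑ x, lockProb16 N t dC m E M i x)
      ((n:ℝ)) (∑ x : Fin N,
            -((lockProb16 N t dC m E M i x / (∑ x', lockProb16 N t dC m E M i x')) *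
              Real.logb 2
                (lockProb16 N t dC m E M i x / (∑ x', lockProb16 N t dC m E M i x')))))]
    rw [Finset.sum_sub_distrib, ← Finset.sum_mul, hpsum, one_mul]
  rw [hsplit]
  have key : ∀ i : Fin m, (∑ x, lockProb16 N t dC m E M i x) *
          ((n:ℝ) - ∑ x : Fin N,
            -((lockProb16 N t dC m E M i x / (∑ x', lockProb16 N t dC m E M i x')) *
              Real.logb 2
                (lockProb16 N t dC m E M i x / (∑ x', lockProb16 N t dC m E M i x'))))
      ≤ (∑ x, lockProb16 N t dC m E M i x) *
          (2 * ε * n + (-(2 * ε) * Real.log (2 * ε))) := by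
    intro i
    rcases eq_or_lt_of_le (hp0 i) with h | hpi
    · rw [← h, zero_mul, zero_mul]
    · apply mul_le_mul_of_nonneg_left _ (hp0 i)
      exact aux_core n N hN
        (fun x => lockProb16 N t dC m E M i x / (∑ x', lockProb16 N t dC m E M i x'))
        (fun x => div_nonneg (hlp0 i x) (hp0 i))
        (by rw [← Finset.sum_div, div_self (ne_of_gt hpi)])
        ε hε hε' (hlock m M hM hM1 i hpi)
  calc ∑ i : Fin m, (∑ x, lockProb16 N t dC m E M i x) *
          ((n:ℝ) - ∑ x : Fin N,
            -((lockProb16 N t dC m E M i x / (∑ x', lockProb16 N t dC m E M i x')) *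
              Real.logb 2
                (lockProb16 N t dC m E M i x / (∑ x', lockProb16 N t dC m E M i x'))))
      ≤ ∑ i : Fin m, (∑ x, lockProb16 N t dC m E M i x) *
          (2 * ε * n + (-(2 * ε) * Real.log (2 * ε))) :=
        Finset.sum_le_sum fun i _ => key i
    _ = 2 * ε * n + (-(2 * ε) * Real.log (2 * ε)) := by
        rw [← Finset.sum_mul, hpsum, one_mul]
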